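/- Assume the graphicality criterion: if Σ_v d_v = nd̄ ≡ 0 (mod k) and there is an integer p with max_v d_v ≤ binom(p−1,k−1) and nd̄ ≥ (max_v d_v −1)p+1, then d is k-graphical. Under this assumption, if 20k < n and k·Δ^{1+1/(k−1)} ≤ (1/2)·d̄n where Δ = max_v d_v, then d is k-graphical. -/

import Mathlib

open Finset

/-- `d` is `k`-graphical: some `k`-uniform hypergraph on `[n]` has degree sequence `d`. -/
def IsKGraphical (n k : ℕ) (d : Fin n → ℤ) : Prop :=
  ∃ H : Finset (Finset (Fin n)), (∀ e ∈ H, e.card = k) ∧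
    ∀ v, ((H.filter (fun e => v ∈ e)).card : ℤ) = d v

/-- `(m/r)^r ≤ C(m,r)` in cross-multiplied natural number form. -/
lemma aux_pow_le_choose (r : ℕ) : ∀ m, r ≤ m → m ^ r ≤ r ^ r * m.choose r := by
  induction r with
  | zero => intro m _; simp
  | succ r ih =>
    intro m hm
    obtain ⟨s, rfl⟩ : ∃ s, m = s + 1 := ⟨m - 1, by omega⟩
    have hrs : r ≤ s := by omega
    rcases Nat.eq_zero_or_pos r with hr | hr
    · subst hr; simp
    · have ih' := ih s hrs
      have key : (s + 1) * Nat.choose s r = Nat.choose (s + 1) (r + 1) * (r + 1) :=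
        Nat.add_one_mul_choose_eq s r
      have h1 : (s + 1) * r ≤ (r + 1) * s := by nlinarith
      have h2 : ((s + 1) * r) ^ r ≤ ((r + 1) * s) ^ r := Nat.pow_le_pow_left h1 r
      have hrr : 0 < r ^ r := Nat.pow_pos hr
      refine Nat.le_of_mul_le_mul_right ?_ hrr
      calc (s + 1) ^ (r + 1) * r ^ r
          = (s + 1) * ((s + 1) * r) ^ r := by rw [mul_pow]; ring
        _ ≤ (s + 1) * ((r + 1) * s) ^ r := Nat.mul_le_mul_left _ h2
        _ = (r + 1) ^ r * ((s + 1) * s ^ r) := by rw [mul_pow]; ring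
        _ ≤ (r + 1) ^ r * ((s + 1) * (r ^ r * Nat.choose s r)) :=
            Nat.mul_le_mul_left _ (Nat.mul_le_mul_left _ ih')
        _ = (r + 1) ^ r * r ^ r * ((s + 1) * Nat.choose s r) := by ring
        _ = (r + 1) ^ r * r ^ r * (Nat.choose (s + 1) (r + 1) * (r + 1)) := by rw [key]
        _ = (r + 1) ^ (r + 1) * Nat.choose (s + 1) (r + 1) * r ^ r := by ring

/-- assuming the graphicality criterion (as a hypothesis),
if `20k < n` and `k·Δ^{1+1/(k−1)} ≤ (1/2)·d̄·n`, then `d` is `k`-graphical. -/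
theorem stmt5 (n k : ℕ) (d : Fin n → ℤ) (Δ : ℤ) (dbar : ℚ)
    (hk : 2 ≤ k) (hn : 20 * k < n)
    (hd : ∀ v, 0 ≤ d v)
    (hΔ : IsGreatest (Set.range d) Δ)
    (havg : ((∑ v, d v : ℤ) : ℚ) = (n : ℚ) * dbar)
    (hdvd : (k : ℤ) ∣ ∑ v, d v)
    (hcrit : (∃ p : ℕ, (Δ : ℚ) ≤ ((p - 1).choose (k - 1) : ℚ) ∧
        ((Δ : ℚ) - 1) * (p : ℚ) + 1 ≤ (n : ℚ) * dbar) → IsKGraphical n k d)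
    (hmain : (k : ℝ) * (Δ : ℝ) ^ (1 + 1 / ((k : ℝ) - 1)) ≤ (1 / 2) * (dbar : ℝ) * (n : ℝ)) :
    IsKGraphical n k d := by
  obtain ⟨v0, hv0⟩ := hΔ.1
  have hΔ0 : 0 ≤ Δ := hv0 ▸ hd v0
  have hsum0 : (0 : ℤ) ≤ ∑ v, d v := Finset.sum_nonneg fun v _ => hd v
  have hnd : (0 : ℚ) ≤ (n : ℚ) * dbar := by rw [← havg]; exact_mod_cast hsum0
  apply hcrit
  rcases eq_or_lt_of_le hΔ0 with hΔ0' | hΔ1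
  · -- Δ = 0 : take p = 1
    refine ⟨1, ?_, ?_⟩
    · rw [show ((1:ℕ) - 1) = 0 from rfl]
      rw [Nat.choose_eq_zero_of_lt (by omega)]
      simp [← hΔ0']
    · rw [← hΔ0']; push_cast; linarith
  · -- Δ ≥ 1
    have hΔ1' : (1 : ℤ) ≤ Δ := hΔ1
    set x : ℝ := (Δ : ℝ) with hxdef
    have hx1 : (1 : ℝ) ≤ x := by rw [hxdef]; exact_mod_cast hΔ1'
    have hkR : (1 : ℝ) ≤ (k : ℝ) - 1 := by
      have : (2 : ℝ) ≤ (k : ℝ) := by exact_mod_cast hk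
      linarith
    set e : ℝ := 1 / ((k : ℝ) - 1) with hedef
    have he0 : 0 < e := by positivity
    have he1 : e ≤ 1 := by
      rw [hedef, div_le_one (by linarith)]; linarith
    have hkcast : ((k - 1 : ℕ) : ℝ) = (k : ℝ) - 1 := by
      have h1 : 1 ≤ k := by omega
      push_cast [h1]; ring
    obtain ⟨t, ht1, htx, hxt⟩ : ∃ t : ℝ, 1 ≤ t ∧ t ^ (k - 1 : ℕ) = x ∧
        x ^ (1 + e) = x * t := by
      refine ⟨x ^ e, Real.one_le_rpow hx1 he0.le, ?_, ?_⟩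
      · rw [← Real.rpow_natCast (x ^ e) (k - 1), ← Real.rpow_mul (by linarith),
          hkcast, hedef, one_div_mul_cancel (by linarith), Real.rpow_one]
      · rw [Real.rpow_add (by linarith : (0:ℝ) < x), Real.rpow_one]
    obtain ⟨p, hp1, hple, hpub⟩ : ∃ p : ℕ, 1 ≤ p ∧ (k : ℝ) * t ≤ (p : ℝ) ∧
        (p : ℝ) < (k : ℝ) * t + 1 := by
      have hkt0 : (0 : ℝ) < (k : ℝ) * t := by positivity
      exact ⟨⌈(k : ℝ) * t⌉₊, Nat.one_le_ceil_iff.mpr hkt0, Nat.le_ceil _,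
        Nat.ceil_lt_add_one hkt0.le⟩
    have hpm1 : ((p - 1 : ℕ) : ℝ) = (p : ℝ) - 1 := by
      push_cast [hp1]; ring
    have hkey : ((k - 1 : ℕ) : ℝ) * t ≤ ((p - 1 : ℕ) : ℝ) := by
      rw [hkcast, hpm1]
      nlinarith
    have hkp : (k - 1 : ℕ) ≤ (p - 1 : ℕ) := by
      have h1 : ((k - 1 : ℕ) : ℝ) ≤ ((p - 1 : ℕ) : ℝ) := by nlinarith [hkcast ▸ hkR]
      exact_mod_cast h1
    refine ⟨p, ?_, ?_⟩
    · -- Δ ≤ C(p-1, k-1)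
      have hch := aux_pow_le_choose (k - 1) (p - 1) hkp
      have hchR : ((p - 1 : ℕ) : ℝ) ^ (k - 1 : ℕ) ≤
          ((k - 1 : ℕ) : ℝ) ^ (k - 1 : ℕ) * ((p - 1).choose (k - 1) : ℝ) := by
        exact_mod_cast hch
      have hstep : (((k - 1 : ℕ) : ℝ) * t) ^ (k - 1 : ℕ) ≤ ((p - 1 : ℕ) : ℝ) ^ (k - 1 : ℕ) :=
        pow_le_pow_left₀ (by positivity) hkey _
      rw [mul_pow, htx] at hstep
      have hpos : (0 : ℝ) < ((k - 1 : ℕ) : ℝ) ^ (k - 1 : ℕ) := by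
        rw [hkcast]; positivity
      have hfin : x ≤ ((p - 1).choose (k - 1) : ℝ) :=
        le_of_mul_le_mul_left (le_trans hstep hchR) hpos
      rw [hxdef] at hfin
      exact_mod_cast hfin
    · -- (Δ-1)p + 1 ≤ n dbar
      have hxe : x ≤ x ^ (1 + e) := by
        calc x = x ^ (1 : ℝ) := (Real.rpow_one x).symm
          _ ≤ x ^ (1 + e) := Real.rpow_le_rpow_of_exponent_le hx1 (by linarith)
      obtain ⟨A, hAt, hAx, hAm⟩ : ∃ A : ℝ, x * t = A ∧ x ≤ A ∧
          (k : ℝ) * A ≤ 1 / 2 * (dbar : ℝ) * (n : ℝ) :=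
        ⟨x ^ (1 + e), hxt.symm, hxe, hmain⟩
      have hk2 : (2 : ℝ) ≤ (k : ℝ) := by exact_mod_cast hk
      have hndR : (0 : ℝ) ≤ (n : ℝ) * (dbar : ℝ) := by exact_mod_cast hnd
      have hA0 : (0 : ℝ) ≤ A := le_trans (by linarith) hAx
      have hint : (0 : ℝ) ≤ ((k : ℝ) - 2) * A := mul_nonneg (by linarith) hA0
      have hgoal : (x - 1) * (p : ℝ) + 1 ≤ (n : ℝ) * (dbar : ℝ) := by
        have hpR : (1 : ℝ) ≤ (p : ℝ) := by exact_mod_cast hp1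
        have h2 : x * (p : ℝ) ≤ x * ((k : ℝ) * t + 1) :=
          mul_le_mul_of_nonneg_left hpub.le (by linarith)
        have h3 : x * ((k : ℝ) * t + 1) = (k : ℝ) * (x * t) + x := by ring
        rw [h3, hAt] at h2
        nlinarith [h2, hint, hAx, hAm, hndR, hpR, hx1]
      rw [hxdef] at hgoal
      exact_mod_cast hgoal
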